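/- Let (M,d) be a metric space, (E,ρ) a complete metric space, K > 0, and T : M → E a K-Lipschitz map. Let (N,D) be a complete metric space, j : M → N a map with dense range satisfying D(j(x),j(y)) = (1/K)·ρ(T(x),T(y)) for all x,y ∈ M, and T̄ : N → E a K-Lipschitz map with T = T̄ ∘ j. Suppose (J,ρ̄) is another complete metric space, i₀ : M → J is a 1-Lipschitz map whose range is dense in J, and T₀ : J → E is a K-Lipschitz map with T = T₀ ∘ i₀. Then there exists a 1-Lipschitz map i : J → N such that i ∘ i₀ = j and T̄ ∘ i = T₀. -/

import Mathlib

open MeasureTheory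

/-- Maximality of the factorization of a `K`-Lipschitz map `T : M → E`
through the completion `N` of the metric quotient of `M` by the pseudometric
`(x,y) ↦ (1/K)·dist (T x) (T y)`: any other factorization `T = T₀ ∘ i₀` through a complete
metric space `J` (with `i₀` `1`-Lipschitz of dense range and `T₀` `K`-Lipschitz) factors
further through `N` via a `1`-Lipschitz map `i : J → N` with `i ∘ i₀ = j` and `T̄ ∘ i = T₀`. -/
theorem maximality_of_lipschitz_factorization
    {M E N J : Type*} [MetricSpace M] [MetricSpace E] [CompleteSpace E]
    [MetricSpace N] [CompleteSpace N] [MetricSpace J] [CompleteSpace J]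
    (K : ℝ) (hK : 0 < K) (T : M → E)
    (hT : ∀ x y : M, dist (T x) (T y) ≤ K * dist x y)
    (j : M → N) (hj_dense : DenseRange j)
    (hj : ∀ x y : M, dist (j x) (j y) = (1 / K) * dist (T x) (T y))
    (Tbar : N → E) (hTbar : ∀ a b : N, dist (Tbar a) (Tbar b) ≤ K * dist a b)
    (hfact : ∀ x : M, T x = Tbar (j x))
    (i₀ : M → J) (hi₀ : ∀ x y : M, dist (i₀ x) (i₀ y) ≤ dist x y)
    (hi₀_dense : DenseRange i₀)
    (T₀ : J → E) (hT₀ : ∀ a b : J, dist (T₀ a) (T₀ b) ≤ K * dist a b)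
    (hfact₀ : ∀ x : M, T x = T₀ (i₀ x)) :
    ∃ i : J → N,
      (∀ a b : J, dist (i a) (i b) ≤ dist a b) ∧
      (∀ x : M, i (i₀ x) = j x) ∧
      (∀ z : J, Tbar (i z) = T₀ z) := by
  -- key inequality: dist (j x) (j y) ≤ dist (i₀ x) (i₀ y)
  have key : ∀ x y : M, dist (j x) (j y) ≤ dist (i₀ x) (i₀ y) := by
    intro x y
    rw [hj]
    have h1 : dist (T x) (T y) = dist (T₀ (i₀ x)) (T₀ (i₀ y)) := by
      rw [hfact₀ x, hfact₀ y]
    rw [h1]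
    have := hT₀ (i₀ x) (i₀ y)
    calc (1 / K) * dist (T₀ (i₀ x)) (T₀ (i₀ y)) ≤ (1 / K) * (K * dist (i₀ x) (i₀ y)) := by
          apply mul_le_mul_of_nonneg_left this
          positivity
      _ = dist (i₀ x) (i₀ y) := by field_simp
  -- the range of i₀ as a subtype
  set S : Set J := Set.range i₀ with hS
  -- a map f : S → N
  have hmem : ∀ s : S, ∃ x : M, i₀ x = (s : J) := fun s => s.2
  let f : S → N := fun s => j (Classical.choose (hmem s))
  have hfspec : ∀ s : S, i₀ (Classical.choose (hmem s)) = (s : J) :=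
    fun s => Classical.choose_spec (hmem s)
  have hf_lip : LipschitzWith 1 f := by
    apply LipschitzWith.of_dist_le_mul
    intro s t
    simp only [NNReal.coe_one, one_mul]
    calc dist (f s) (f t)
        ≤ dist (i₀ (Classical.choose (hmem s))) (i₀ (Classical.choose (hmem t))) :=
          key _ _
      _ = dist (s : J) (t : J) := by rw [hfspec s, hfspec t]
  -- f applied to any point ⟨i₀ x, _⟩ equals j x
  have hf_eq : ∀ (x : M) (h : (i₀ x : J) ∈ S), f ⟨i₀ x, h⟩ = j x := by
    intro x h
    have h0 : dist (f ⟨i₀ x, h⟩) (j x) ≤ dist (i₀ (Classical.choose (hmem ⟨i₀ x, h⟩))) (i₀ x) :=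
      key _ _
    rw [hfspec ⟨i₀ x, h⟩] at h0
    simp only [dist_self] at h0
    exact eq_of_dist_eq_zero (le_antisymm h0 dist_nonneg)
  -- inclusion of S into J is uniform inducing with dense range
  have hue : IsUniformInducing ((↑) : S → J) := isometry_subtype_coe.isUniformInducing
  have hd : DenseRange ((↑) : S → J) := hi₀_dense.denseRange_val
  let i : J → N := (hue.isDenseInducing hd).extend f
  have hi_uc : UniformContinuous i :=
    uniformContinuous_uniformly_extend hue hd hf_lip.uniformContinuous
  have hi_cont : Continuous i := hi_uc.continuous
  have hi_on : ∀ s : S, i (s : J) = f s := fun s =>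
    uniformly_extend_of_ind hue hd hf_lip.uniformContinuous s
  have hi_comp : ∀ x : M, i (i₀ x) = j x := by
    intro x
    have h : (i₀ x : J) ∈ S := ⟨x, rfl⟩
    have := hi_on ⟨i₀ x, h⟩
    rw [this, hf_eq]
  refine ⟨i, ?_, hi_comp, ?_⟩
  · -- 1-Lipschitz, by density
    intro a b
    have hclosed : IsClosed {p : J × J | dist (i p.1) (i p.2) ≤ dist p.1 p.2} := by
      apply isClosed_le
      · exact (hi_cont.comp continuous_fst).dist (hi_cont.comp continuous_snd)
      · exact continuous_fst.dist continuous_snd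
    have hdense : Dense (Set.range (fun p : M × M => (i₀ p.1, i₀ p.2))) := by
      have : DenseRange (Prod.map i₀ i₀) := hi₀_dense.prodMap hi₀_dense
      exact this
    have hsub : Set.range (fun p : M × M => (i₀ p.1, i₀ p.2)) ⊆
        {p : J × J | dist (i p.1) (i p.2) ≤ dist p.1 p.2} := by
      rintro _ ⟨⟨x, y⟩, rfl⟩
      simp only [Set.mem_setOf_eq]
      rw [hi_comp x, hi_comp y]
      exact key x y
    have : ((a, b) : J × J) ∈ closure {p : J × J | dist (i p.1) (i p.2) ≤ dist p.1 p.2} := by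
      apply closure_mono hsub
      rw [hdense.closure_eq]; trivial
    rwa [hclosed.closure_eq] at this
  · -- Tbar ∘ i = T₀
    intro z
    have hclosed : IsClosed {z : J | Tbar (i z) = T₀ z} := by
      apply isClosed_eq
      · exact (LipschitzWith.of_dist_le_mul (K := ⟨K, hK.le⟩) (by
          intro a b; exact hTbar a b)).continuous.comp hi_cont
      · exact (LipschitzWith.of_dist_le_mul (K := ⟨K, hK.le⟩) (by
          intro a b; exact hT₀ a b)).continuous
    have hsub : Set.range i₀ ⊆ {z : J | Tbar (i z) = T₀ z} := by
      rintro _ ⟨x, rfl⟩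
      simp only [Set.mem_setOf_eq]
      rw [hi_comp x, ← hfact x, hfact₀ x]
    have : z ∈ closure {z : J | Tbar (i z) = T₀ z} := by
      apply closure_mono hsub
      rw [hi₀_dense.closure_range]; trivial
    rwa [hclosed.closure_eq] at this
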